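/- Let c₁, …, c_n, c' be i.i.d. real-valued random variables whose common distribution is atomless, and let k ∈ {1,…,n}. Let c₍ₖ₎ denote the k-th smallest value among c₁,…,c_n. Then P( c' ≤ c₍ₖ₎ ) = k/(n+1). In particular, for α ∈ (0,1), if k = ⌈(1−α)(n+1)⌉ and k ≤ n, then P( c' ≤ c₍ₖ₎ ) ≥ 1 − α. -/

import Mathlib

open MeasureTheory ProbabilityTheory Finset
open scoped ENNReal

/-- The `k`-th smallest entry (zero-indexed `k : Fin n`) of a tuple `v : Fin n → ℝ`. -/
noncomputable def kthSmallest {n : ℕ} (v : Fin n → ℝ) (k : Fin n) : ℝ :=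
  v (Tuple.sort v k)

namespace FreshScoreAux

lemma card_filter_comp_perm {m : ℕ} (σ : Equiv.Perm (Fin m)) (p : Fin m → Prop)
    [DecidablePred p] :
    (univ.filter fun j => p (σ j)).card = (univ.filter p).card := by
  rw [← Finset.card_map σ.toEmbedding]
  congr 1
  ext j
  simp [Equiv.eq_symm_apply]

lemma card_univ_filter_lt (m k : ℕ) (hk : k ≤ m) :
    ((univ : Finset (Fin m)).filter fun j : Fin m => (j : ℕ) < k).card = k := by
  rcases eq_or_lt_of_le hk with rfl | h
  · rw [Finset.filter_true_of_mem (fun j _ => j.isLt)]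
    simp
  · have : ((univ : Finset (Fin m)).filter fun j : Fin m => (j : ℕ) < k)
        = Finset.Iio ⟨k, h⟩ := by
      ext i; simp [Fin.lt_def]
    rw [this, Fin.card_Iio]

lemma le_kthSmallest_iff {m : ℕ} (v : Fin m → ℝ) (k : ℕ) (hk : k < m) (t : ℝ) :
    t ≤ kthSmallest v ⟨k, hk⟩ ↔ (univ.filter fun i => v i < t).card ≤ k := by
  have hcard : (univ.filter fun i => v i < t).card
      = (univ.filter fun i => (v ∘ Tuple.sort v) i < t).card :=
    (card_filter_comp_perm (Tuple.sort v) (fun i => v i < t)).symm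
  rw [hcard]
  set w := v ∘ Tuple.sort v with hw
  have hmono : Monotone w := Tuple.monotone_sort v
  constructor
  · intro h
    have hsub : (univ.filter fun i => w i < t)
        ⊆ (univ.filter fun i : Fin m => (i : ℕ) < k) := by
      intro i hi
      simp only [mem_filter, mem_univ, true_and] at hi ⊢
      by_contra hik
      push_neg at hik
      have h1 : w ⟨k, hk⟩ ≤ w i := hmono (by simpa [Fin.le_def] using hik)
      have h2 : t ≤ w i := le_trans h h1
      exact absurd hi (not_lt.mpr h2)
    calc (univ.filter fun i => w i < t).card ≤ _ := Finset.card_le_card hsub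
      _ = k := card_univ_filter_lt m k hk.le
  · intro h
    by_contra hlt
    push_neg at hlt
    have hsub : (univ.filter fun i : Fin m => (i : ℕ) ≤ k)
        ⊆ (univ.filter fun i => w i < t) := by
      intro i hi
      simp only [mem_filter, mem_univ, true_and] at hi ⊢
      exact lt_of_le_of_lt (hmono (by simpa [Fin.le_def] using hi)) hlt
    have hcc := Finset.card_le_card hsub
    have hcard2 : (univ.filter fun i : Fin m => (i : ℕ) ≤ k).card = k + 1 := by
      have : (univ.filter fun i : Fin m => (i : ℕ) ≤ k) = Finset.Iic ⟨k, hk⟩ := by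
        ext i; simp [Fin.le_def]
      rw [this, Fin.card_Iic]
    omega

lemma card_rank_lt {m : ℕ} (x : Fin m → ℝ) (hx : Function.Injective x) (k : ℕ) (hk : k ≤ m) :
    (univ.filter fun i => (univ.filter fun j => x j < x i).card < k).card = k := by
  have hrank : ∀ i : Fin m, (univ.filter fun j => x j < x i).card < m := by
    intro i
    have hsub : (univ.filter fun j => x j < x i) ⊆ univ.erase i := by
      intro j hj
      simp only [mem_filter, mem_univ, true_and] at hj
      exact Finset.mem_erase.mpr ⟨fun h => absurd hj (by rw [h]; exact lt_irrefl _), mem_univ _⟩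
    calc (univ.filter fun j => x j < x i).card ≤ (univ.erase i).card :=
          Finset.card_le_card hsub
      _ = m - 1 := by rw [Finset.card_erase_of_mem (mem_univ _)]; simp
      _ < m := by have := i.pos; omega
  set ρ : Fin m → Fin m := fun i => ⟨(univ.filter fun j => x j < x i).card, hrank i⟩ with hρ
  have hmonoρ : ∀ i i', x i < x i' → (ρ i : ℕ) < (ρ i' : ℕ) := by
    intro i i' hlt
    show (univ.filter fun j => x j < x i).card < (univ.filter fun j => x j < x i').card
    apply Finset.card_lt_card
    constructor
    · intro j hj
      simp only [mem_filter, mem_univ, true_and] at hj ⊢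
      exact hj.trans hlt
    · intro hsub
      have h1 : i ∈ univ.filter fun j => x j < x i' := by simp [hlt]
      have h2 := hsub h1
      simp only [mem_filter, mem_univ, true_and] at h2
      exact absurd h2 (lt_irrefl _)
  have hinj : Function.Injective ρ := by
    intro i i' h
    by_contra hne
    rcases lt_trichotomy (x i) (x i') with hvl | hve | hvl
    · have := hmonoρ i i' hvl; rw [h] at this; exact absurd this (lt_irrefl _)
    · exact hne (hx hve)
    · have := hmonoρ i' i hvl; rw [h] at this; exact absurd this (lt_irrefl _)
  have hbij : Function.Bijective ρ := (Finite.injective_iff_bijective).mp hinj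
  set e : Equiv.Perm (Fin m) := Equiv.ofBijective ρ hbij with he
  have hiff : (univ.filter fun i => (univ.filter fun j => x j < x i).card < k)
      = (univ.filter fun i => ((e i : Fin m) : ℕ) < k) := by
    congr 1
  rw [hiff, card_filter_comp_perm e (fun j => (j : ℕ) < k), card_univ_filter_lt m k hk]

lemma card_filter_castSucc (n : ℕ) (x : Fin (n + 1) → ℝ) :
    (univ.filter fun j : Fin (n + 1) => x j < x (Fin.last n)).card
      = (univ.filter fun i : Fin n => x i.castSucc < x (Fin.last n)).card := by
  rw [Fin.univ_castSuccEmb, Finset.filter_cons, if_neg (lt_irrefl _), Finset.filter_map,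
    Finset.card_map]
  rfl

lemma measurable_rank {m : ℕ} (i : Fin m) :
    Measurable fun x : Fin m → ℝ => (univ.filter fun j => x j < x i).card := by
  simp_rw [Finset.card_filter]
  exact Finset.measurable_sum _ fun j _ =>
    Measurable.ite (measurableSet_lt (measurable_pi_apply j) (measurable_pi_apply i))
      measurable_const measurable_const

lemma measurableSet_rankLt {m : ℕ} (i : Fin m) (k : ℕ) :
    MeasurableSet {x : Fin m → ℝ | (univ.filter fun j => x j < x i).card < k} := by
  have : {x : Fin m → ℝ | (univ.filter fun j => x j < x i).card < k}
      = (fun x : Fin m → ℝ => (univ.filter fun j => x j < x i).card) ⁻¹' {a | a < k} := rfl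
  rw [this]
  exact measurable_rank i MeasurableSpace.measurableSet_top

lemma pi_map_comp_perm {m : ℕ} (μ : Measure ℝ) [IsProbabilityMeasure μ]
    (σ : Equiv.Perm (Fin m)) :
    (Measure.pi fun _ : Fin m => μ).map (fun x j => x (σ j)) = Measure.pi fun _ => μ := by
  have hT : Measurable fun (x : Fin m → ℝ) j => x (σ j) :=
    measurable_pi_lambda _ fun j => measurable_pi_apply (σ j)
  refine (Measure.pi_eq fun s hs => ?_).symm
  rw [Measure.map_apply hT (MeasurableSet.univ_pi hs)]
  have hpre : (fun (x : Fin m → ℝ) j => x (σ j)) ⁻¹' Set.pi Set.univ s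
      = Set.pi Set.univ (fun j => s (σ.symm j)) := by
    ext x
    simp only [Set.mem_preimage, Set.mem_pi, Set.mem_univ, true_implies]
    exact ⟨fun h j => by simpa using h (σ.symm j), fun h i => by simpa using h (σ i)⟩
  rw [hpre, Measure.pi_pi]
  exact σ.symm.prod_comp fun i => μ (s i)

lemma prod_diag_null (μ : Measure ℝ) [IsProbabilityMeasure μ] [NullSingletonClass μ] :
    (μ.prod μ) {p : ℝ × ℝ | p.1 = p.2} = 0 := by
  have hd : MeasurableSet {p : ℝ × ℝ | p.1 = p.2} :=
    measurableSet_eq_fun measurable_fst measurable_snd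
  rw [Measure.prod_apply hd]
  have h0 : ∀ a : ℝ, μ (Prod.mk a ⁻¹' {p : ℝ × ℝ | p.1 = p.2}) = 0 := by
    intro a
    have : Prod.mk a ⁻¹' {p : ℝ × ℝ | p.1 = p.2} = {a} := by
      ext b; simp [eq_comm]
    rw [this]; exact measure_singleton a
  simp [h0]

end FreshScoreAux

open FreshScoreAux

theorem fresh_score_le_order_statistic
    {Ω : Type*} [MeasurableSpace Ω] (P : Measure Ω) [IsProbabilityMeasure P]
    (n : ℕ) (μ : Measure ℝ) [IsProbabilityMeasure μ] [NullSingletonClass μ]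
    (c : Fin (n + 1) → Ω → ℝ)
    (hmeas : ∀ i, Measurable (c i))
    (hindep : iIndepFun c P)
    (hlaw : ∀ i, P.map (c i) = μ)
    (k : ℕ) (hk1 : 1 ≤ k) (hkn : k ≤ n)
    (chat : Ω → ℝ)
    (hchat : chat = fun ω =>
      kthSmallest (fun i : Fin n => c i.castSucc ω) ⟨k - 1, by omega⟩) :
    (P {ω | c (Fin.last n) ω ≤ chat ω}).toReal = k / (n + 1) ∧
      ∀ α : ℝ, α ∈ Set.Ioo (0 : ℝ) 1 → k = ⌈(1 - α) * ((n : ℝ) + 1)⌉₊ →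
        1 - α ≤ (P {ω | c (Fin.last n) ω ≤ chat ω}).toReal := by
  classical
  set F : Ω → (Fin (n + 1) → ℝ) := fun ω i => c i ω with hF_def
  have hF : Measurable F := measurable_pi_lambda _ fun i => hmeas i
  set ν : Measure (Fin (n + 1) → ℝ) := Measure.pi fun _ => μ with hν_def
  -- joint law
  have hjoint : P.map F = ν := by
    refine (Measure.pi_eq fun s hs => ?_).symm
    rw [Measure.map_apply hF (MeasurableSet.univ_pi hs)]
    have hpre : F ⁻¹' Set.pi Set.univ s = ⋂ i, c i ⁻¹' s i := by
      ext ω; simp [hF_def, Set.mem_pi]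
    rw [hpre, hindep.meas_iInter fun i => ⟨s i, hs i, rfl⟩]
    refine Finset.prod_congr rfl fun i _ => ?_
    rw [← hlaw i, Measure.map_apply (hmeas i) (hs i)]
  -- the rank events
  set B : Fin (n + 1) → Set (Fin (n + 1) → ℝ) :=
    fun i => {x | (univ.filter fun j => x j < x i).card < k} with hB_def
  have hBmeas : ∀ i, MeasurableSet (B i) := fun i => measurableSet_rankLt i k
  -- event rewriting
  have hk1n : k - 1 < n := by omega
  have hEvent : {ω | c (Fin.last n) ω ≤ chat ω} = F ⁻¹' B (Fin.last n) := by
    ext ω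
    simp only [Set.mem_setOf_eq, Set.mem_preimage, hchat, hB_def]
    rw [le_kthSmallest_iff _ (k - 1) hk1n]
    have hcc := card_filter_castSucc n (F ω)
    simp only [hF_def] at hcc
    constructor
    · intro h; rw [hcc]; omega
    · intro h; rw [hcc] at h; omega
  -- symmetry
  have hsym : ∀ i, ν (B i) = ν (B (Fin.last n)) := by
    intro i
    set σ : Equiv.Perm (Fin (n + 1)) := Equiv.swap i (Fin.last n) with hσ
    have hT : Measurable fun (x : Fin (n + 1) → ℝ) j => x (σ j) :=
      measurable_pi_lambda _ fun j => measurable_pi_apply (σ j)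
    have hmp : ν.map (fun x j => x (σ j)) = ν := pi_map_comp_perm μ σ
    have h1 : ν (B (Fin.last n)) = ν ((fun x j => x (σ j)) ⁻¹' B (Fin.last n)) := by
      conv_lhs => rw [← hmp]
      rw [Measure.map_apply hT (hBmeas _)]
    have h2 : (fun (x : Fin (n + 1) → ℝ) j => x (σ j)) ⁻¹' B (Fin.last n) = B i := by
      ext x
      simp only [Set.mem_preimage, hB_def, Set.mem_setOf_eq, hσ, Equiv.swap_apply_right]
      rw [card_filter_comp_perm (Equiv.swap i (Fin.last n)) (fun j => x j < x i)]
    rw [h1, h2]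
  -- a.e. injectivity
  have hDnull : ν {x : Fin (n + 1) → ℝ | ¬ Function.Injective x} = 0 := by
    have hsub : {x : Fin (n + 1) → ℝ | ¬ Function.Injective x}
        ⊆ ⋃ (i : Fin (n + 1)) (j : Fin (n + 1)) (_ : i ≠ j),
          {x : Fin (n + 1) → ℝ | x i = x j} := by
      intro x hx
      simp only [Set.mem_setOf_eq, Function.Injective] at hx
      push_neg at hx
      obtain ⟨i, j, hij, hne⟩ := hx
      exact Set.mem_iUnion.mpr ⟨i, Set.mem_iUnion.mpr ⟨j, Set.mem_iUnion.mpr ⟨hne, hij⟩⟩⟩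
    refine measure_mono_null hsub ?_
    refine measure_iUnion_null fun i => measure_iUnion_null fun j =>
      measure_iUnion_null fun hij => ?_
    have hmeq : MeasurableSet {x : Fin (n + 1) → ℝ | x i = x j} :=
      measurableSet_eq_fun (measurable_pi_apply i) (measurable_pi_apply j)
    rw [← hjoint, Measure.map_apply hF hmeq]
    have hprei : F ⁻¹' {x : Fin (n + 1) → ℝ | x i = x j} = {ω | c i ω = c j ω} := rfl
    rw [hprei]
    have hpair : P.map (fun ω => (c i ω, c j ω)) = μ.prod μ := by
      have hip := (indepFun_iff_map_prod_eq_prod_map_map (hmeas i).aemeasurable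
        (hmeas j).aemeasurable).mp (hindep.indepFun hij)
      rw [hip, hlaw i, hlaw j]
    have hdm : MeasurableSet {p : ℝ × ℝ | p.1 = p.2} :=
      measurableSet_eq_fun measurable_fst measurable_snd
    have heq : {ω | c i ω = c j ω}
        = (fun ω => (c i ω, c j ω)) ⁻¹' {p : ℝ × ℝ | p.1 = p.2} := rfl
    rw [heq, ← Measure.map_apply ((hmeas i).prodMk (hmeas j)) hdm, hpair,
      prod_diag_null μ]
  -- counting identity
  have hcount : ∑ i : Fin (n + 1), ν (B i) = (k : ℝ≥0∞) := by
    have hind : ∀ i : Fin (n + 1),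
        ν (B i) = ∫⁻ x, (B i).indicator (fun _ => (1 : ℝ≥0∞)) x ∂ν := by
      intro i
      exact (lintegral_indicator_one (hBmeas i)).symm
    simp_rw [hind]
    rw [← lintegral_finset_sum _ fun i _ =>
      ((measurable_const : Measurable fun _ : Fin (n + 1) → ℝ => (1 : ℝ≥0∞)).indicator
        (hBmeas i))]
    have hae : ∀ᵐ x ∂ν, Function.Injective x := by
      rw [ae_iff]
      exact hDnull
    have hcongr : ∀ᵐ x ∂ν,
        (∑ i : Fin (n + 1), (B i).indicator (fun _ => (1 : ℝ≥0∞)) x) = (k : ℝ≥0∞) := by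
      filter_upwards [hae] with x hx
      have hsum : (∑ i : Fin (n + 1), (B i).indicator (fun _ => (1 : ℝ≥0∞)) x)
          = ((univ.filter fun i => x ∈ B i).card : ℝ≥0∞) := by
        rw [Finset.card_filter]
        push_cast
        refine Finset.sum_congr rfl fun i _ => ?_
        by_cases h : x ∈ B i <;> simp [h, Set.indicator]
      rw [hsum]
      have hcrl : (univ.filter fun i => x ∈ B i).card = k := by
        simp only [hB_def, Set.mem_setOf_eq]
        exact card_rank_lt x hx k (by omega)
      rw [hcrl]
    rw [lintegral_congr_ae hcongr, lintegral_const, measure_univ, mul_one]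
  -- conclude
  have hsum_eq : ∑ i : Fin (n + 1), ν (B i)
      = ((n + 1 : ℕ) : ℝ≥0∞) * ν (B (Fin.last n)) := by
    rw [Finset.sum_congr rfl fun i _ => hsym i, Finset.sum_const, Finset.card_univ,
      Fintype.card_fin, nsmul_eq_mul]
  have hmul : ((n + 1 : ℕ) : ℝ≥0∞) * ν (B (Fin.last n)) = (k : ℝ≥0∞) := by
    rw [← hsum_eq, hcount]
  have hBlast : ν (B (Fin.last n)) = (k : ℝ≥0∞) / ((n + 1 : ℕ) : ℝ≥0∞) := by
    rw [ENNReal.eq_div_iff (by exact_mod_cast Nat.succ_ne_zero n) (by simp)]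
    exact hmul
  have hPval : P {ω | c (Fin.last n) ω ≤ chat ω} = (k : ℝ≥0∞) / ((n + 1 : ℕ) : ℝ≥0∞) := by
    rw [hEvent, ← hBlast, ← hjoint, Measure.map_apply hF (hBmeas _)]
  have hmain : (P {ω | c (Fin.last n) ω ≤ chat ω}).toReal = k / (n + 1) := by
    rw [hPval, ENNReal.toReal_div]
    rw [ENNReal.toReal_natCast, ENNReal.toReal_natCast]
    push_cast
    ring
  refine ⟨hmain, ?_⟩
  intro α hα hkα
  rw [hmain]
  have hle : (1 - α) * ((n : ℝ) + 1) ≤ (k : ℝ) := by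
    rw [hkα]; exact Nat.le_ceil _
  have hpos : (0 : ℝ) < (n : ℝ) + 1 := by positivity
  rw [le_div_iff₀ hpos]
  exact hle
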